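/- Every piecewise syndetic subset of ℕ contains arbitrarily long arithmetic progressions. -/

import Mathlib

/-- `H` has gaps bounded by `d`: any element with a successor in `H` has one within `d`. -/
def GapsBdd (H : Finset ℕ) (d : ℕ) : Prop :=
  ∀ x ∈ H, (∃ y ∈ H, x < y) → ∃ z ∈ H, x < z ∧ z ≤ x + d

/-- gap size: largest difference between consecutive elements; `1` if `|H| ≤ 1`. -/
noncomputable def gapSize (H : Finset ℕ) : ℕ :=
  if H.card ≤ 1 then 1 else sInf {d | GapsBdd H d}

/-- `X` is piecewise `d`-syndetic. -/
def PWSyndWith (d : ℕ) (X : Set ℕ) : Prop :=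
  ∀ n : ℕ, ∃ H : Finset ℕ, (∀ x ∈ H, x ∈ X) ∧ n ≤ H.card ∧ GapsBdd H d

/-- `X` is piecewise syndetic. -/
def PWSynd (X : Set ℕ) : Prop := ∃ d, PWSyndWith d X

/-- consecutive elements of `X` differ by at most `d`. -/
def SyndWith (d : ℕ) (X : Set ℕ) : Prop :=
  ∀ x ∈ X, ∃ y ∈ X, x < y ∧ y ≤ x + d

/-- `X` is syndetic: an infinite set with bounded gaps. -/
def Syndetic (X : Set ℕ) : Prop := X.Infinite ∧ ∃ d, SyndWith d X

/-- `X` is thick: contains arbitrarily long intervals. -/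
def Thick (X : Set ℕ) : Prop := ∀ n : ℕ, ∃ a : ℕ, ∀ m, a ≤ m → m < a + n → m ∈ X

/-- `X` contains arbitrarily long arithmetic progressions. -/
def APSet (X : Set ℕ) : Prop := ∀ l : ℕ, ∃ a e : ℕ, 0 < e ∧ ∀ i < l, a + i * e ∈ X

/-- In a finite set with gaps bounded by `d`, every point between min and max is within `d`
of an element above it. -/
lemma exists_near (H : Finset ℕ) (d : ℕ) (hg : GapsBdd H d) (t : ℕ) (hne : H.Nonempty)
    (h1 : H.min' hne ≤ t) (h2 : t ≤ H.max' hne) : ∃ h ∈ H, t ≤ h ∧ h ≤ t + d := by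
  by_cases ht : t ∈ H
  · exact ⟨t, ht, le_rfl, Nat.le_add_right _ _⟩
  · have hmlt : H.min' hne < t := by
      rcases lt_or_eq_of_le h1 with h | h
      · exact h
      · exact absurd (h ▸ H.min'_mem hne) ht
    set B := H.filter (· < t) with hB
    have hBne : B.Nonempty := ⟨H.min' hne, by simp [hB, H.min'_mem hne, hmlt]⟩
    set x := B.max' hBne with hx
    have hxB : x ∈ B := B.max'_mem hBne
    have hxH : x ∈ H := (Finset.mem_filter.mp hxB).1
    have hxt : x < t := (Finset.mem_filter.mp hxB).2
    have hsucc : ∃ y ∈ H, x < y :=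
      ⟨H.max' hne, H.max'_mem hne, lt_of_lt_of_le hxt h2⟩
    obtain ⟨z, hzH, hxz, hzd⟩ := hg x hxH hsucc
    refine ⟨z, hzH, ?_, ?_⟩
    · by_contra hzt
      push_neg at hzt
      have : z ∈ B := Finset.mem_filter.mpr ⟨hzH, hzt⟩
      exact absurd (B.le_max' z this) (not_le.mpr hxz)
    · calc z ≤ x + d := hzd
        _ ≤ t + d := by omega

theorem pws_is_AP (X : Set ℕ) (hX : PWSynd X) : APSet X := by
  obtain ⟨d, hd⟩ := hX
  intro l
  rcases l with _ | l'
  · exact ⟨0, 1, one_pos, fun i hi => absurd hi (Nat.not_lt_zero i)⟩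
  set l := l' + 1 with hl
  have hl0 : 0 < l := Nat.succ_pos l'
  -- choose witnesses with cardinality ≥ n+1 so all are nonempty
  choose H hHX hHcard hHgap using fun n => hd (n + 1)
  have hne : ∀ n, (H n).Nonempty := fun n =>
    Finset.card_pos.mp (lt_of_lt_of_le (Nat.succ_pos n) (hHcard n))
  -- span grows at least linearly
  have hspan : ∀ n, n ≤ (H n).max' (hne n) - (H n).min' (hne n) := by
    intro n
    have hsub : H n ⊆ Finset.Icc ((H n).min' (hne n)) ((H n).max' (hne n)) := by
      intro x hx
      exact Finset.mem_Icc.mpr ⟨(H n).min'_le x hx, (H n).le_max' x hx⟩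
    have := Finset.card_le_card hsub
    rw [Nat.card_Icc] at this
    have := hHcard n
    omega
  -- the coloring: distance to the next element of `H n` above min' + j
  have key : ∀ n j, j ≤ (H n).max' (hne n) - (H n).min' (hne n) →
      sInf {k | (H n).min' (hne n) + j + k ∈ H n} ≤ d ∧
      (H n).min' (hne n) + j + sInf {k | (H n).min' (hne n) + j + k ∈ H n} ∈ H n := by
    intro n j hj
    have hmm : (H n).min' (hne n) ≤ (H n).max' (hne n) :=
      (H n).min'_le _ ((H n).max'_mem (hne n))
    obtain ⟨h, hhH, hth, hhd⟩ := exists_near (H n) d (hHgap n) ((H n).min' (hne n) + j) (hne n)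
      (Nat.le_add_right _ _) (by omega)
    have hmem : h - ((H n).min' (hne n) + j) ∈ {k | (H n).min' (hne n) + j + k ∈ H n} := by
      simp only [Set.mem_setOf_eq]
      have : (H n).min' (hne n) + j + (h - ((H n).min' (hne n) + j)) = h := by omega
      rw [this]; exact hhH
    constructor
    · exact le_trans (Nat.sInf_le hmem) (by omega)
    · exact Nat.sInf_mem ⟨_, hmem⟩
  -- finitary coloring, truncated into `Fin (d+1)`
  set col : ℕ → ℕ → Fin (d + 1) := fun n j =>
    if h : sInf {k | (H n).min' (hne n) + j + k ∈ H n} ≤ d then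
      ⟨sInf {k | (H n).min' (hne n) + j + k ∈ H n}, Nat.lt_succ_of_le h⟩
    else 0 with hcol
  -- limit coloring along the hyperfilter
  have hlim : ∀ j : ℕ, ∃ v : Fin (d + 1), {n | col n j = v} ∈ Filter.hyperfilter ℕ := by
    intro j
    obtain ⟨v, hv⟩ := Ultrafilter.eq_pure_of_finite ((Filter.hyperfilter ℕ).map (fun n => col n j))
    refine ⟨v, ?_⟩
    have : {v} ∈ ((Filter.hyperfilter ℕ).map (fun n => col n j) : Ultrafilter (Fin (d+1))) := by
      rw [hv]; simp
    rw [Ultrafilter.mem_map] at this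
    exact this
  choose c hc using hlim
  -- van der Waerden (via Hales–Jewett) on the limit coloring
  obtain ⟨a, ha, b, v, hv⟩ := Combinatorics.exists_mono_homothetic_copy (Finset.range l) c
  -- pick a single n that works for all l positions and has large span
  have hbig : {n : ℕ | b + l * a ≤ n} ∈ Filter.hyperfilter ℕ :=
    Filter.mem_hyperfilter_of_finite_compl (by
      have : {n : ℕ | b + l * a ≤ n}ᶜ ⊆ Set.Iio (b + l * a) := by
        intro n hn; simp at hn ⊢; omega
      exact Set.Finite.subset (Set.finite_Iio _) this)
  have hall : ∀ᶠ n in (Filter.hyperfilter ℕ : Filter ℕ),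
      ∀ i ∈ Finset.range l, col n (a * i + b) = c (a * i + b) :=
    (Filter.eventually_all_finset (Finset.range l)).mpr (fun i _ => hc (a * i + b))
  have hbig' : ∀ᶠ n in (Filter.hyperfilter ℕ : Filter ℕ), b + l * a ≤ n := hbig
  obtain ⟨n, hn1, hn2⟩ := (hall.and hbig').exists
  -- assemble the AP
  refine ⟨(H n).min' (hne n) + b + (c b).val, a, ha, ?_⟩
  intro i hi
  have hjle : a * i + b ≤ (H n).max' (hne n) - (H n).min' (hne n) := by
    have hn2' : b + l * a ≤ n := hn2
    have := hspan n
    have : a * i + b ≤ b + l * a := by nlinarith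
    omega
  obtain ⟨hsinf, hmem⟩ := key n (a * i + b) hjle
  have hcoln : col n (a * i + b) = c (a * i + b) := hn1 i (Finset.mem_range.mpr hi)
  have hcv : c (a * i + b) = v := by
    have := hv i (Finset.mem_range.mpr hi)
    simpa [smul_eq_mul] using this
  have hcb : c b = v := by
    have := hv 0 (Finset.mem_range.mpr hl0)
    simpa using this
  have hcolval : (col n (a * i + b)).val = sInf {k | (H n).min' (hne n) + (a * i + b) + k ∈ H n} := by
    rw [hcol]; simp [hsinf]
  have : (H n).min' (hne n) + b + (c b).val + i * a =
      (H n).min' (hne n) + (a * i + b) + (col n (a * i + b)).val := by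
    rw [hcoln, hcv, hcb]; ring
  apply hHX n
  rw [this, hcolval]
  exact hmem
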